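/- Let (p_1,...,p_k) and (q_1,...,q_l) be two compositions of the same integer n. If ∏_{j=1}^l ∏_{a=1}^{q_j} (1−z^a) = ∏_{j=1}^k ∏_{b=1}^{p_j} (1−z^b) as polynomials in ℂ[z], then the multisets {p_1,...,p_k} and {q_1,...,q_l} coincide (in particular k = l). -/

import Mathlib

open Polynomial Multiset

private lemma one_sub_X_pow_ne_zero {a : ℕ} (ha : 0 < a) :
    (1 - (X : Polynomial ℂ) ^ a) ≠ 0 := by
  intro hc
  have : (1 : Polynomial ℂ) = X ^ a := by linear_combination hc
  have := congrArg natDegree this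
  simp [natDegree_X_pow] at this
  omega

private lemma count_roots_one_sub {d a : ℕ} (hd : 0 < d) (ha : 0 < a) :
    ((1 - (X : Polynomial ℂ) ^ a).roots).count (Complex.exp (2 * Real.pi * Complex.I / d))
      = if d ∣ a then 1 else 0 := by
  set ζ := Complex.exp (2 * Real.pi * Complex.I / d) with hζdef
  have hprim : IsPrimitiveRoot ζ d := Complex.isPrimitiveRoot_exp d hd.ne'
  have heq : (1 - (X : Polynomial ℂ) ^ a) = -(X ^ a - C 1) := by rw [map_one]; ring
  have hsep : ((X : Polynomial ℂ) ^ a - C 1).Separable :=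
    separable_X_pow_sub_C 1 (by exact_mod_cast ha.ne') one_ne_zero
  rw [heq, roots_neg]
  have hnz : ((X : Polynomial ℂ) ^ a - C 1) ≠ 0 := by
    have := one_sub_X_pow_ne_zero (a := a) ha
    intro hc; apply this; rw [heq, hc, neg_zero]
  have hnd := nodup_roots hsep
  by_cases hmem : ζ ∈ ((X : Polynomial ℂ) ^ a - C 1).roots
  · have hdvd : d ∣ a := by
      have := (mem_roots hnz).mp hmem
      simp [IsRoot, sub_eq_zero] at this
      exact (hprim.pow_eq_one_iff_dvd a).mp this
    rw [if_pos hdvd]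
    exact count_eq_one_of_mem hnd hmem
  · have hndvd : ¬ d ∣ a := by
      intro hdvd
      apply hmem
      rw [mem_roots hnz]
      simp [IsRoot, sub_eq_zero, (hprim.pow_eq_one_iff_dvd a).mpr hdvd]
    rw [if_neg hndvd, count_eq_zero]
    exact hmem

private lemma count_roots_prod_P {d : ℕ} (hd : 0 < d) {ι : Type*} [Fintype ι]
    (f : ι → ℕ) (hf : ∀ j, 0 < f j) :
    ((∏ j : ι, ∏ a ∈ Finset.Icc 1 (f j), (1 - (X : Polynomial ℂ) ^ a)).roots).count
        (Complex.exp (2 * Real.pi * Complex.I / d))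
      = ∑ j : ι, f j / d := by
  set ζ := Complex.exp (2 * Real.pi * Complex.I / d)
  have hinner : ∀ j : ι, (∏ a ∈ Finset.Icc 1 (f j), (1 - (X : Polynomial ℂ) ^ a)) ≠ 0 := by
    intro j
    apply Finset.prod_ne_zero_iff.mpr
    intro a ha
    exact one_sub_X_pow_ne_zero (Finset.mem_Icc.mp ha).1
  have houter : (∏ j : ι, ∏ a ∈ Finset.Icc 1 (f j), (1 - (X : Polynomial ℂ) ^ a)) ≠ 0 :=
    Finset.prod_ne_zero_iff.mpr fun j _ => hinner j
  rw [roots_prod _ _ houter, count_bind]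
  have : ∀ j : ι,
      count ζ ((∏ a ∈ Finset.Icc 1 (f j), (1 - (X : Polynomial ℂ) ^ a)).roots) = f j / d := by
    intro j
    rw [roots_prod _ _ (hinner j), count_bind]
    have : (Multiset.map (fun a => count ζ ((1 - (X : Polynomial ℂ) ^ a).roots))
        (Finset.Icc 1 (f j)).val).sum
        = ∑ a ∈ Finset.Icc 1 (f j), (if d ∣ a then 1 else 0) := by
      rw [Finset.sum]
      congr 1
      apply Multiset.map_congr rfl
      intro a ha
      exact count_roots_one_sub hd (by have := Finset.mem_Icc.mp (Finset.mem_val.mp ha); omega)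
    rw [this, ← Finset.card_filter]
    have : Finset.Icc 1 (f j) = Finset.Ioc 0 (f j) := by
      ext x; simp [Nat.lt_iff_add_one_le]
    rw [this]
    exact Nat.Ioc_filter_dvd_card_eq_div (f j) d
  calc (Multiset.map (fun j => count ζ ((∏ a ∈ Finset.Icc 1 (f j),
          (1 - (X : Polynomial ℂ) ^ a)).roots)) Finset.univ.val).sum
      = ∑ j : ι, count ζ ((∏ a ∈ Finset.Icc 1 (f j), (1 - (X : Polynomial ℂ) ^ a)).roots) := rfl
    _ = ∑ j : ι, f j / d := Finset.sum_congr rfl fun j _ => this j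

private lemma div_sum_eq_count {N : ℕ} (hN : 0 < N) (s : Multiset ℕ) (hmax : ∀ x ∈ s, x ≤ N) :
    (s.map (· / N)).sum = s.count N := by
  induction s using Multiset.induction with
  | empty => simp
  | cons x s ih =>
    have hx : x ≤ N := hmax x (mem_cons_self x s)
    rw [Multiset.map_cons, Multiset.sum_cons, ih (fun y hy => hmax y (mem_cons_of_mem hy))]
    rcases eq_or_lt_of_le hx with h | h
    · rw [h, Nat.div_self hN, count_cons_self]; omega
    · rw [Nat.div_eq_of_lt h, count_cons_of_ne (by omega), zero_add]

private lemma multiset_eq_of_div_sums (s : Multiset ℕ) :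
    ∀ t : Multiset ℕ, (∀ x ∈ s, 0 < x) → (∀ x ∈ t, 0 < x) →
    (∀ d, 0 < d → (s.map (· / d)).sum = (t.map (· / d)).sum) → s = t := by
  induction s using Multiset.strongInductionOn with
  | _ s ih =>
    intro t hs ht h
    rcases eq_or_ne (s + t) 0 with h0 | h0
    · have hc := congrArg Multiset.card h0
      rw [Multiset.card_add, Multiset.card_zero] at hc
      rw [Multiset.card_eq_zero.mp (by omega : Multiset.card s = 0),
        Multiset.card_eq_zero.mp (by omega : Multiset.card t = 0)]
    · have hne : (s + t).toFinset.Nonempty := by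
        rw [Multiset.toFinset_nonempty]; exact h0
      set N := (s + t).toFinset.max' hne with hNdef
      have hNmem : N ∈ s + t := Multiset.mem_toFinset.mp ((s + t).toFinset.max'_mem hne)
      have hNmax : ∀ x ∈ s + t, x ≤ N := fun x hx =>
        Finset.le_max' _ x (Multiset.mem_toFinset.mpr hx)
      have hN1 : 0 < N := by
        rcases Multiset.mem_add.mp hNmem with h' | h'
        exacts [hs N h', ht N h']
      have hcount : s.count N = t.count N := by
        have := h N hN1
        rwa [div_sum_eq_count hN1 s (fun x hx => hNmax x (Multiset.mem_add.mpr (Or.inl hx))),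
          div_sum_eq_count hN1 t (fun x hx => hNmax x (Multiset.mem_add.mpr (Or.inr hx)))] at this
      have hNs : N ∈ s ∧ N ∈ t := by
        rcases Multiset.mem_add.mp hNmem with h' | h'
        · exact ⟨h', by rw [← Multiset.count_pos, ← hcount, Multiset.count_pos]; exact h'⟩
        · exact ⟨by rw [← Multiset.count_pos, hcount, Multiset.count_pos]; exact h', h'⟩
      have hse : s = N ::ₘ s.erase N := (Multiset.cons_erase hNs.1).symm
      have hte : t = N ::ₘ t.erase N := (Multiset.cons_erase hNs.2).symm
      have key : s.erase N = t.erase N := by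
        apply ih (s.erase N) (Multiset.erase_lt.mpr hNs.1)
        · exact fun x hx => hs x (Multiset.mem_of_mem_erase hx)
        · exact fun x hx => ht x (Multiset.mem_of_mem_erase hx)
        · intro d hd
          have := h d hd
          rw [hse, hte, Multiset.map_cons, Multiset.map_cons, Multiset.sum_cons,
            Multiset.sum_cons] at this
          omega
      rw [hse, hte, key]

theorem poly_identity_forces_same_composition {k l n : ℕ}
    (p : Fin k → ℕ) (q : Fin l → ℕ) (hp : ∀ j, 0 < p j) (hq : ∀ j, 0 < q j)
    (hpsum : ∑ j, p j = n) (hqsum : ∑ j, q j = n)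
    (h : (∏ j : Fin l, ∏ a ∈ Finset.Icc 1 (q j),
            (1 - (Polynomial.X : Polynomial ℂ) ^ a)) =
          ∏ j : Fin k, ∏ b ∈ Finset.Icc 1 (p j),
            (1 - (Polynomial.X : Polynomial ℂ) ^ b)) :
    (Finset.univ.val.map p = Finset.univ.val.map q) ∧ k = l := by
  have hmain : (Finset.univ.val.map p : Multiset ℕ) = Finset.univ.val.map q := by
    apply multiset_eq_of_div_sums
    · intro x hx
      obtain ⟨j, _, rfl⟩ := Multiset.mem_map.mp hx
      exact hp j
    · intro x hx
      obtain ⟨j, _, rfl⟩ := Multiset.mem_map.mp hx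
      exact hq j
    · intro d hd
      have h1 := count_roots_prod_P hd p hp
      have h2 := count_roots_prod_P hd q hq
      rw [← h] at h1
      have : (∑ j, p j / d) = ∑ j, q j / d := by rw [← h1, h2]
      simpa [Finset.sum, Function.comp_def] using this
  refine ⟨hmain, ?_⟩
  have := congrArg Multiset.card hmain
  simpa using this
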